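/- Let G be a connected finite simple graph with a split between A and B, let τ be a circle representation of G, and let γ_1, …, γ_{2k} be the maximal A- and B-subwords of the circular subsequence γ of τ induced by A ∪ B. If x occurs in γ_i, y occurs in γ_j, x ≠ y, and γ_j is neither γ_i nor its opposite word γ_{i+k} (indices modulo 2k), then x and y are adjacent in G. -/

import Mathlib

/-- The segment of the word `τ` strictly between the two occurrences of `u`. -/
def betweenOccs {V : Type*} [DecidableEq V] (τ : List V) (u : V) : List V :=
  ((τ.dropWhile (fun x => decide (x ≠ u))).drop 1).takeWhile (fun x => decide (x ≠ u))

/-- Two symbols `u` and `v` alternate in the circular word `τ` (i.e. their four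
occurrences appear in cyclic order `u, v, u, v`): exactly one of the two
occurrences of `v` lies strictly between the two occurrences of `u`. -/
def Alternates {V : Type*} [DecidableEq V] (τ : List V) (u v : V) : Prop :=
  (betweenOccs τ u).count v = 1

/-- `τ` is a circle representation of `G`: a circular word (modelled as a list read
cyclically) in which every vertex occurs exactly twice, and two distinct vertices are
adjacent iff their occurrences alternate. -/
def IsCircleRep {V : Type*} [DecidableEq V] (G : SimpleGraph V) (τ : List V) : Prop :=
  (∀ v : V, τ.count v = 2) ∧
  ∀ u v : V, u ≠ v → (G.Adj u v ↔ Alternates τ u v)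

/-- A split of `G` between `A` and `B`, with short sides `SA = 𝔰(A)` and `SB = 𝔰(B)`:
a partition of the vertices into four parts such that every vertex of `A` is adjacent
to every vertex of `B`, there are no edges between `SA` and `B ∪ SB` nor between
`SB` and `A ∪ SA`, and both sides have at least two vertices. -/
def IsSplit {V : Type*} [DecidableEq V] (G : SimpleGraph V) (A B SA SB : Finset V) : Prop :=
  (∀ v : V, v ∈ A ∪ B ∪ SA ∪ SB) ∧
  Disjoint A B ∧ Disjoint A SA ∧ Disjoint A SB ∧
  Disjoint B SA ∧ Disjoint B SB ∧ Disjoint SA SB ∧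
  (∀ a ∈ A, ∀ b ∈ B, G.Adj a b) ∧
  (∀ s ∈ SA, ∀ x ∈ B ∪ SB, ¬ G.Adj s x) ∧
  (∀ s ∈ SB, ∀ x ∈ A ∪ SA, ¬ G.Adj s x) ∧
  2 ≤ (A ∪ SA).card ∧ 2 ≤ (B ∪ SB).card

section Aux
variable {V : Type*} [DecidableEq V]

lemma not_mem_cons_of {u x : V} {s : List V} (hx : ¬ x = u) (hs : u ∉ s) : u ∉ x :: s := by
  simp only [List.mem_cons]
  rintro (rfl | hh)
  · exact hx rfl
  · exact hs hh

lemma decomp1 {l : List V} {u : V} (h : l.count u = 1) :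
    ∃ s1 s2 : List V, l = s1 ++ u :: s2 ∧ u ∉ s1 ∧ u ∉ s2 := by
  induction l with
  | nil => simp at h
  | cons x t ih =>
    by_cases hx : x = u
    · subst hx
      rw [List.count_cons_self] at h
      exact ⟨[], t, by simp, by simp, List.count_eq_zero.mp (by omega)⟩
    · rw [List.count_cons_of_ne hx] at h
      obtain ⟨s1, s2, rfl, h1, h2⟩ := ih h
      exact ⟨x :: s1, s2, by simp, not_mem_cons_of hx h1, h2⟩

lemma decomp2 {l : List V} {u : V} (h : l.count u = 2) :
    ∃ s0 s1 s2 : List V, l = s0 ++ u :: s1 ++ u :: s2 ∧ u ∉ s0 ∧ u ∉ s1 ∧ u ∉ s2 := by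
  induction l with
  | nil => simp at h
  | cons x t ih =>
    by_cases hx : x = u
    · subst hx
      rw [List.count_cons_self] at h
      obtain ⟨s1, s2, rfl, h1, h2⟩ := decomp1 (l := t) (u := x) (by omega)
      exact ⟨[], s1, s2, by simp, by simp, h1, h2⟩
    · rw [List.count_cons_of_ne hx] at h
      obtain ⟨s0, s1, s2, rfl, h0, h1, h2⟩ := ih h
      exact ⟨x :: s0, s1, s2, by simp, not_mem_cons_of hx h0, h1, h2⟩

lemma betweenOccs_decomp {s0 s1 s2 : List V} {u : V} (h0 : u ∉ s0) (h1 : u ∉ s1) :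
    betweenOccs (s0 ++ u :: s1 ++ u :: s2) u = s1 := by
  unfold betweenOccs
  have hd : List.dropWhile (fun x => decide (x ≠ u)) (s0 ++ u :: s1 ++ u :: s2)
      = u :: s1 ++ u :: s2 := by
    rw [show s0 ++ u :: s1 ++ u :: s2 = s0 ++ (u :: (s1 ++ u :: s2)) by simp]
    rw [List.dropWhile_append]
    have he : List.dropWhile (fun x => decide (x ≠ u)) s0 = [] := by
      rw [List.dropWhile_eq_nil_iff]
      intro x hx
      simp only [ne_eq, decide_eq_true_eq]
      exact fun h => h0 (h ▸ hx)
    rw [he]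
    simp
  rw [hd]
  simp only [List.cons_append, List.drop_succ_cons, List.drop_zero]
  rw [List.takeWhile_append]
  have ht : List.takeWhile (fun x => decide (x ≠ u)) s1 = s1 :=
    List.takeWhile_eq_self_iff.mpr (fun x hx => by
      simp only [ne_eq, decide_eq_true_eq]
      exact fun h => h1 (h ▸ hx))
  rw [ht]
  simp

lemma alternates_decomp {s0 s1 s2 : List V} {u v : V} (h0 : u ∉ s0) (h1 : u ∉ s1) :
    Alternates (s0 ++ u :: s1 ++ u :: s2) u v ↔ s1.count v = 1 := by
  unfold Alternates
  rw [betweenOccs_decomp h0 h1]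

lemma alternates_filter {p : V → Bool} {l : List V} {u v : V}
    (hu : p u = true) (hv : p v = true) (h2 : l.count u = 2) :
    Alternates (l.filter p) u v ↔ Alternates l u v := by
  obtain ⟨s0, s1, s2, rfl, h0, h1, _⟩ := decomp2 h2
  have hf : List.filter p (s0 ++ u :: s1 ++ u :: s2)
      = (s0.filter p) ++ u :: (s1.filter p) ++ u :: (s2.filter p) := by
    simp [List.filter_append, List.filter_cons, hu]
  rw [hf]
  rw [alternates_decomp (fun h => h0 (List.mem_of_mem_filter h))
      (fun h => h1 (List.mem_of_mem_filter h)),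
    alternates_decomp h0 h1, List.count_filter hv]

lemma alternates_rotate_one {x : V} {t : List V} {u v : V}
    (hu : (x :: t).count u = 2) (hv : (x :: t).count v = 2) (huv : u ≠ v) :
    Alternates (x :: t) u v ↔ Alternates (t ++ [x]) u v := by
  by_cases hx : x = u
  · subst hx
    rw [List.count_cons_self] at hu
    obtain ⟨s1, s2, rfl, h1, h2⟩ := decomp1 (l := t) (u := x) (by omega)
    have hvc : s1.count v + s2.count v = 2 := by
      have := hv
      simp [List.count_cons, List.count_append, Ne.symm huv, huv] at this
      omega
    have e1 : x :: (s1 ++ x :: s2) = [] ++ x :: s1 ++ x :: s2 := by simp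
    have e2 : (s1 ++ x :: s2) ++ [x] = s1 ++ x :: s2 ++ x :: [] := by simp
    rw [e1, e2, alternates_decomp (by simp) h1, alternates_decomp h1 h2]
    omega
  · have ht : t.count u = 2 := by
      rw [List.count_cons_of_ne hx] at hu; exact hu
    obtain ⟨s0, s1, s2, rfl, h0, h1, h2⟩ := decomp2 ht
    have e1 : x :: (s0 ++ u :: s1 ++ u :: s2) = (x :: s0) ++ u :: s1 ++ u :: s2 := by simp
    have e2 : (s0 ++ u :: s1 ++ u :: s2) ++ [x] = s0 ++ u :: s1 ++ u :: (s2 ++ [x]) := by simp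
    rw [e1, e2, alternates_decomp (by
        simp only [List.mem_cons]
        rintro (rfl | hh)
        exacts [hx rfl, h0 hh]) h1,
      alternates_decomp h0 h1]

lemma alternates_rotate {l : List V} {u v : V} (n : ℕ)
    (hu : l.count u = 2) (hv : l.count v = 2) (huv : u ≠ v) :
    Alternates l u v ↔ Alternates (l.rotate n) u v := by
  induction n generalizing l with
  | zero => rw [List.rotate_zero]
  | succ n ih =>
    cases l with
    | nil => simp at hu
    | cons x t =>
      rw [List.rotate_cons_succ]
      rw [alternates_rotate_one hu hv huv]
      exact ih (by simp [List.count_append, List.count_cons] at hu ⊢; omega)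
        (by simp [List.count_append, List.count_cons] at hv ⊢; omega)

lemma alternates_isRotated {l l' : List V} {u v : V} (h : l ~r l')
    (hu : l.count u = 2) (hv : l.count v = 2) (huv : u ≠ v) :
    Alternates l u v ↔ Alternates l' u v := by
  obtain ⟨n, rfl⟩ := h
  exact alternates_rotate n hu hv huv

lemma range'_split (s a b : ℕ) (h : a ≤ b) :
    List.range' s b = List.range' s a ++ List.range' (s + a) (b - a) := by
  conv_lhs => rw [show b = (b - a) + a by omega]
  rw [show b - a + a = a + (b - a) by omega, ← List.range'_append (s := s) (m := a) (n := b - a) (step := 1)]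
  simp

lemma sum_map_range' (f : ℕ → ℕ) (s len : ℕ) :
    ((List.range' s len).map f).sum = ∑ m ∈ Finset.Ico s (s + len), f m := by
  induction len generalizing s with
  | zero => simp
  | succ n ih =>
    rw [List.range'_succ, List.map_cons, List.sum_cons, ih (s + 1)]
    rw [show s + (n + 1) = (s + 1) + n by omega]
    rw [Finset.sum_Ico_eq_sum_range, Finset.sum_Ico_eq_sum_range]
    simp only [Nat.add_sub_cancel_left, show s + 1 + n - s = n + 1 by omega]
    rw [Finset.sum_range_succ']
    simp only [Nat.add_zero]
    rw [add_comm]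
    congr 1
    apply Finset.sum_congr rfl
    intro i _
    congr 1
    omega

variable {V : Type*} [DecidableEq V]

lemma count_flatten_range' (u : V) (γ : ℕ → List V) (s len : ℕ) :
    (((List.range' s len).map γ).flatten.count u) = ∑ m ∈ Finset.Ico s (s + len), (γ m).count u := by
  rw [List.count_flatten, List.map_map, ← sum_map_range']
  rfl

lemma count_flatten_range (u : V) (γ : ℕ → List V) (n : ℕ) :
    (((List.range n).map γ).flatten.count u) = ∑ m ∈ Finset.range n, (γ m).count u := by
  rw [List.range_eq_range', count_flatten_range' u γ 0 n]
  rw [Finset.range_eq_Ico]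
  simp

lemma not_mem_flatten_of_counts {u : V} {γ : ℕ → List V} {s len : ℕ}
    (h : ∀ m, s ≤ m → m < s + len → (γ m).count u = 0) :
    u ∉ ((List.range' s len).map γ).flatten := by
  rw [← List.count_eq_zero, count_flatten_range']
  apply Finset.sum_eq_zero
  intro m hm
  rw [Finset.mem_Ico] at hm
  exact h m hm.1 hm.2

lemma alternates_flatten_iff {γ : ℕ → List V} {n i1 i2 : ℕ} {u v : V} (huv : u ≠ v)
    (h12 : i1 < i2) (h2n : i2 < n)
    (hu1 : (γ i1).count u = 1) (hu2 : (γ i2).count u = 1)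
    (hu0 : ∀ m, m < n → m ≠ i1 → m ≠ i2 → (γ m).count u = 0)
    (hv1 : (γ i1).count v = 0) (hv2 : (γ i2).count v = 0) :
    Alternates ((List.range n).map γ).flatten u v ↔
      (∑ m ∈ Finset.Ioo i1 i2, (γ m).count v) = 1 := by
  have e1 : List.range' 0 n = List.range' 0 i1 ++ List.range' i1 (n - i1) := by
    simpa using range'_split 0 i1 n (by omega)
  have e2 : List.range' i1 (n - i1) = [i1] ++ List.range' (i1+1) (n - i1 - 1) := by
    have := range'_split i1 1 (n - i1) (by omega)
    simpa [List.range'_one] using this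
  have e3 : List.range' (i1+1) (n - i1 - 1)
      = List.range' (i1+1) (i2 - i1 - 1) ++ List.range' i2 (n - i2) := by
    have := range'_split (i1+1) (i2 - i1 - 1) (n - i1 - 1) (by omega)
    rw [show i1 + 1 + (i2 - i1 - 1) = i2 by omega,
      show n - i1 - 1 - (i2 - i1 - 1) = n - i2 by omega] at this
    exact this
  have e4 : List.range' i2 (n - i2) = [i2] ++ List.range' (i2+1) (n - i2 - 1) := by
    have := range'_split i2 1 (n - i2) (by omega)
    simpa [List.range'_one] using this
  have hsplit : List.range n = List.range' 0 i1 ++ [i1] ++ List.range' (i1+1) (i2-i1-1)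
      ++ [i2] ++ List.range' (i2+1) (n-i2-1) := by
    rw [List.range_eq_range', e1, e2, e3, e4]
    simp [List.append_assoc]
  obtain ⟨a1, a2, ha, ha1, ha2⟩ := decomp1 hu1
  obtain ⟨b1, b2, hb, hb1, hb2⟩ := decomp1 hu2
  set W0 := ((List.range' 0 i1).map γ).flatten with hW0
  set W1 := ((List.range' (i1+1) (i2-i1-1)).map γ).flatten with hW1
  set W2 := ((List.range' (i2+1) (n-i2-1)).map γ).flatten with hW2
  have hw : ((List.range n).map γ).flatten
      = (W0 ++ a1) ++ u :: (a2 ++ W1 ++ b1) ++ u :: (b2 ++ W2) := by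
    rw [hsplit]
    simp only [List.map_append, List.flatten_append, List.map_cons, List.map_nil,
      List.flatten_cons, List.flatten_nil, List.append_nil]
    rw [ha, hb]
    simp [List.append_assoc]
    rfl
  have hnW0 : u ∉ W0 := not_mem_flatten_of_counts (fun m hm hm' => hu0 m (by omega) (by omega) (by omega))
  have hnW1 : u ∉ W1 := not_mem_flatten_of_counts (fun m hm hm' => hu0 m (by omega) (by omega) (by omega))
  have hns0 : u ∉ W0 ++ a1 := by
    simp only [List.mem_append]; rintro (h | h); exacts [hnW0 h, ha1 h]
  have hns1 : u ∉ a2 ++ W1 ++ b1 := by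
    simp only [List.mem_append]; rintro ((h | h) | h); exacts [ha2 h, hnW1 h, hb1 h]
  rw [hw, alternates_decomp hns0 hns1]
  have hca : a2.count v = 0 := by
    rw [ha, List.count_append, List.count_cons] at hv1
    simp [Ne.symm huv] at hv1
    omega
  have hcb : b1.count v = 0 := by
    rw [hb, List.count_append] at hv2
    omega
  have hcW1 : W1.count v = ∑ m ∈ Finset.Ioo i1 i2, (γ m).count v := by
    rw [hW1, count_flatten_range', show i1 + 1 + (i2 - i1 - 1) = i2 by omega,
      Finset.Ico_add_one_left_eq_Ioo]
  rw [List.count_append, List.count_append, hca, hcb, hcW1]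
  omega

lemma not_alternates_flatten_degenerate {γ : ℕ → List V} {n m : ℕ} {u v : V} (huv : u ≠ v)
    (hmn : m < n) (hu : (γ m).count u = 2)
    (hu0 : ∀ m', m' < n → m' ≠ m → (γ m').count u = 0)
    (hv : (γ m).count v = 0) :
    ¬ Alternates ((List.range n).map γ).flatten u v := by
  have e1 : List.range' 0 n = List.range' 0 m ++ List.range' m (n - m) := by
    simpa using range'_split 0 m n (by omega)
  have e2 : List.range' m (n - m) = [m] ++ List.range' (m+1) (n - m - 1) := by
    have := range'_split m 1 (n - m) (by omega)
    simpa [List.range'_one] using this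
  have hsplit : List.range n = List.range' 0 m ++ [m] ++ List.range' (m+1) (n-m-1) := by
    rw [List.range_eq_range', e1, e2]
    simp [List.append_assoc]
  obtain ⟨s0, s1, s2, hs, h0, h1, h2⟩ := decomp2 hu
  set W0 := ((List.range' 0 m).map γ).flatten with hW0
  set W2 := ((List.range' (m+1) (n-m-1)).map γ).flatten with hW2
  have hw : ((List.range n).map γ).flatten
      = (W0 ++ s0) ++ u :: s1 ++ u :: (s2 ++ W2) := by
    rw [hsplit]
    simp only [List.map_append, List.flatten_append, List.map_cons, List.map_nil,
      List.flatten_cons, List.flatten_nil, List.append_nil]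
    rw [hs]
    simp [List.append_assoc]
    rfl
  have hnW0 : u ∉ W0 := not_mem_flatten_of_counts (fun m' hm hm' => hu0 m' (by omega) (by omega))
  have hns0 : u ∉ W0 ++ s0 := by
    simp only [List.mem_append]; rintro (h | h); exacts [hnW0 h, h0 h]
  rw [hw, alternates_decomp hns0 h1]
  have : s1.count v = 0 := by
    rw [hs] at hv
    simp [List.count_append, List.count_cons, Ne.symm huv] at hv
    omega
  omega



lemma card_parity_range {n k r : ℕ} (hn : n = 2*k) (hr : r < 2) :
    ((Finset.range n).filter (fun m => m % 2 = r)).card = k := by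
  rw [← Finset.card_range k]
  apply Finset.card_bij' (fun m _ => m / 2) (fun i _ => 2*i + r) <;>
  · intro a ha
    try simp only [Finset.mem_filter, Finset.mem_range, Finset.mem_Ioo] at ha
    try simp only [Finset.mem_filter, Finset.mem_range, Finset.mem_Ioo]
    omega

lemma card_parity_Ioo {i1 i2 r : ℕ} (h : i1 < i2) (h1 : i1 % 2 = r) (h2 : i2 % 2 = r) :
    ((Finset.Ioo i1 i2).filter (fun m => m % 2 = r)).card = (i2 - i1)/2 - 1 := by
  rw [← Finset.card_range ((i2 - i1)/2 - 1)]
  apply Finset.card_bij' (fun m _ => (m - i1)/2 - 1) (fun i _ => i1 + 2*(i+1)) <;>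
  · intro a ha
    try simp only [Finset.mem_filter, Finset.mem_range, Finset.mem_Ioo] at ha
    try simp only [Finset.mem_filter, Finset.mem_range, Finset.mem_Ioo]
    omega

lemma card_parity_out {n k i1 i2 r : ℕ} (hn : n = 2*k) (h : i1 < i2) (h2n : i2 < n)
    (h1 : i1 % 2 = r) (h2 : i2 % 2 = r) :
    ((Finset.range n).filter (fun m => m % 2 = r ∧ (m < i1 ∨ i2 < m))).card
      = k - (i2 - i1)/2 - 1 := by
  rw [← Finset.card_range (k - (i2 - i1)/2 - 1)]
  apply Finset.card_bij' (fun m _ => if m < i1 then m/2 else m/2 - (i2-i1)/2 - 1)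
    (fun i _ => if 2*i + r < i1 then 2*i + r else 2*i + r + (i2 - i1) + 2) <;>
  · intro a ha
    try simp only [Finset.mem_filter, Finset.mem_range, Finset.mem_Ioo] at ha
    try simp only [Finset.mem_filter, Finset.mem_range, Finset.mem_Ioo]
    split_ifs <;> omega

lemma chord_diameter {n k r : ℕ} (hn : n = 2*k) (hr : r < 2)
    (CA CB : ℕ → ℕ → Prop)
    (hCA : ∀ i1 i2, CA i1 i2 → i1 < i2 ∧ i2 < n ∧ i1 % 2 = r ∧ i2 % 2 = r)
    (hCB : ∀ p1 p2, CB p1 p2 → p1 < p2 ∧ p2 < n ∧ p1 % 2 = 1 - r ∧ p2 % 2 = 1 - r)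
    (cross : ∀ i1 i2 p1 p2, CA i1 i2 → CB p1 p2 →
      (i1 < p1 ∧ p1 < i2 ∧ i2 < p2) ∨ (p1 < i1 ∧ i1 < p2 ∧ p2 < i2))
    (coverA : ∀ m, m < n → m % 2 = r → ∃ i1 i2, CA i1 i2 ∧ (m = i1 ∨ m = i2))
    (coverB : ∀ m, m < n → m % 2 = 1 - r → ∃ p1 p2, CB p1 p2 ∧ (m = p1 ∨ m = p2)) :
    ∀ i1 i2, CA i1 i2 → i2 = i1 + k := by
  -- Claim 1 : two CA chords are equal or interleaved
  have core : ∀ i1 i2 j1 j2, CA i1 i2 → CA j1 j2 → i1 ≤ j1 →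
      (i1 = j1 ∧ i2 = j2) ∨ (i1 < j1 ∧ j1 < i2 ∧ i2 < j2) := by
    intro i1 i2 j1 j2 hX hY hle
    obtain ⟨hi12, hi2n, hi1r, hi2r⟩ := hCA _ _ hX
    obtain ⟨hj12, hj2n, hj1r, hj2r⟩ := hCA _ _ hY
    -- helper to finish from a bad odd point
    have finish : ∀ α, α < n → α % 2 = 1 - r →
        (∀ p1 p2, CB p1 p2 → (α = p1 ∨ α = p2) → False) →
        (i1 = j1 ∧ i2 = j2) ∨ (i1 < j1 ∧ j1 < i2 ∧ i2 < j2) := by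
      intro α h1 h2 h3
      exfalso
      obtain ⟨p1, p2, hB, hm⟩ := coverB α h1 h2
      exact h3 p1 p2 hB hm
    rcases eq_or_lt_of_le hle with heq | hlt
    · subst heq
      rcases lt_trichotomy i2 j2 with h' | h' | h'
      · -- shared left endpoint, i2 < j2 : impossible, α = i2 + 1
        apply finish (i2 + 1) (by omega) (by omega)
        intro p1 p2 hB hm
        obtain ⟨hp12, hp2n, hp1r, hp2r⟩ := hCB _ _ hB
        have c1 := cross _ _ _ _ hX hB
        have c2 := cross _ _ _ _ hY hB
        omega
      · exact Or.inl ⟨rfl, h'⟩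
      · -- shared left, j2 < i2 : α = j2 + 1
        apply finish (j2 + 1) (by omega) (by omega)
        intro p1 p2 hB hm
        obtain ⟨hp12, hp2n, hp1r, hp2r⟩ := hCB _ _ hB
        have c1 := cross _ _ _ _ hX hB
        have c2 := cross _ _ _ _ hY hB
        omega
    · rcases le_or_gt i2 j1 with hsep | hover
      · -- separated (possibly sharing middle point) : α = j2+1 or 0
        by_cases hbig : j2 + 1 < n
        · apply finish (j2 + 1) hbig (by omega)
          intro p1 p2 hB hm
          obtain ⟨hp12, hp2n, hp1r, hp2r⟩ := hCB _ _ hB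
          have c1 := cross _ _ _ _ hX hB
          have c2 := cross _ _ _ _ hY hB
          omega
        · apply finish 0 (by omega) (by omega)
          intro p1 p2 hB hm
          obtain ⟨hp12, hp2n, hp1r, hp2r⟩ := hCB _ _ hB
          have c1 := cross _ _ _ _ hX hB
          have c2 := cross _ _ _ _ hY hB
          omega
      · rcases lt_or_ge i2 j2 with h' | h'
        · exact Or.inr ⟨hlt, hover, h'⟩
        · -- nested : j1 < i2, j2 ≤ i2, i1 < j1 : α = j1 - 1
          apply finish (j1 - 1) (by omega) (by omega)
          intro p1 p2 hB hm
          obtain ⟨hp12, hp2n, hp1r, hp2r⟩ := hCB _ _ hB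
          have c1 := cross _ _ _ _ hX hB
          have c2 := cross _ _ _ _ hY hB
          omega
  have claim1 : ∀ i1 i2 j1 j2, CA i1 i2 → CA j1 j2 →
      (i1 = j1 ∧ i2 = j2) ∨ (i1 < j1 ∧ j1 < i2 ∧ i2 < j2) ∨ (j1 < i1 ∧ i1 < j2 ∧ j2 < i2) := by
    intro i1 i2 j1 j2 hX hY
    rcases le_or_gt i1 j1 with h | h
    · rcases core i1 i2 j1 j2 hX hY h with h' | h'
      · exact Or.inl h'
      · exact Or.inr (Or.inl h')
    · rcases core j1 j2 i1 i2 hY hX h.le with h' | h'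
      · exact Or.inl ⟨h'.1.symm, h'.2.symm⟩
      · exact Or.inr (Or.inr h')
  -- partner uniqueness
  have partner_unique : ∀ m mu mu', (CA m mu ∨ CA mu m) → (CA m mu' ∨ CA mu' m) → mu = mu' := by
    intro m mu mu' h h'
    rcases h with h | h <;> rcases h' with h' | h' <;>
      rcases claim1 _ _ _ _ h h' with ⟨e1, e2⟩ | ⟨a, b, c⟩ | ⟨a, b, c⟩ <;> omega
  -- partner function
  have Hex : ∀ m, ∃ mu, m < n → m % 2 = r → (CA m mu ∨ CA mu m) := by
    intro m
    by_cases h : m < n ∧ m % 2 = r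
    · obtain ⟨a1, a2, hc, hm⟩ := coverA m h.1 h.2
      rcases hm with rfl | rfl
      · exact ⟨a2, fun _ _ => Or.inl hc⟩
      · exact ⟨a1, fun _ _ => Or.inr hc⟩
    · exact ⟨0, fun h1 h2 => absurd ⟨h1, h2⟩ h⟩
  choose μ hμ using Hex
  have hμ1 : ∀ a b, CA a b → μ a = b ∧ μ b = a := by
    intro a b h
    obtain ⟨h1, h2, h3, h4⟩ := hCA _ _ h
    exact ⟨partner_unique a (μ a) b (hμ a (by omega) h3) (Or.inl h),
      partner_unique b (μ b) a (hμ b h2 h4) (Or.inr h)⟩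
  intro i1 i2 hX
  obtain ⟨hi12, hi2n, hi1r, hi2r⟩ := hCA _ _ hX
  have hcard : ((Finset.Ioo i1 i2).filter (fun m => m % 2 = r)).card
      = ((Finset.range n).filter (fun m => m % 2 = r ∧ (m < i1 ∨ i2 < m))).card := by
    apply Finset.card_bij' (fun m _ => μ m) (fun m _ => μ m)
    · intro m hm
      simp only [Finset.mem_filter, Finset.mem_Ioo, Finset.mem_range] at hm ⊢
      obtain ⟨⟨hm1, hm2⟩, hmr⟩ := hm
      rcases hμ m (by omega) hmr with h | h <;>
        obtain ⟨q1, q2, q3, q4⟩ := hCA _ _ h <;>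
        rcases claim1 _ _ _ _ hX h with ⟨e1, e2⟩ | ⟨a, b, c⟩ | ⟨a, b, c⟩ <;> omega
    · intro m hm
      simp only [Finset.mem_filter, Finset.mem_Ioo, Finset.mem_range] at hm ⊢
      obtain ⟨hm1, hmr, hm2⟩ := hm
      rcases hμ m hm1 hmr with h | h <;>
        obtain ⟨q1, q2, q3, q4⟩ := hCA _ _ h <;>
        rcases claim1 _ _ _ _ hX h with ⟨e1, e2⟩ | ⟨a, b, c⟩ | ⟨a, b, c⟩ <;> omega
    · intro m hm
      simp only [Finset.mem_filter, Finset.mem_Ioo] at hm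
      obtain ⟨⟨hm1, hm2⟩, hmr⟩ := hm
      rcases hμ m (by omega) hmr with h | h <;> rcases hμ1 _ _ h with ⟨e1, e2⟩ <;> omega
    · intro m hm
      simp only [Finset.mem_filter, Finset.mem_range] at hm
      obtain ⟨hm1, hmr, hm2⟩ := hm
      rcases hμ m hm1 hmr with h | h <;> rcases hμ1 _ _ h with ⟨e1, e2⟩ <;> omega
  rw [card_parity_Ioo hi12 hi1r hi2r, card_parity_out hn hi12 hi2n hi1r hi2r] at hcard
  omega



lemma sum_zero_all {f : ℕ → ℕ} {n : ℕ} (h : ∑ m ∈ Finset.range n, f m = 0) :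
    ∀ m, m < n → f m = 0 := by
  intro m hm
  exact Finset.sum_eq_zero_iff.mp h m (Finset.mem_range.mpr hm)

lemma sum_one_cases {f : ℕ → ℕ} {n : ℕ} (h : ∑ m ∈ Finset.range n, f m = 1) :
    ∃ m, m < n ∧ f m = 1 ∧ ∀ m', m' < n → m' ≠ m → f m' = 0 := by
  induction n with
  | zero => simp at h
  | succ n ih =>
    rw [Finset.sum_range_succ] at h
    rcases Nat.lt_or_ge 0 (f n) with hp | hp
    · have h0 : ∑ m ∈ Finset.range n, f m = 0 := by omega
      refine ⟨n, by omega, by omega, ?_⟩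
      intro m' hm' hne
      exact sum_zero_all h0 m' (by omega)
    · obtain ⟨m, hm, h1, h0⟩ := ih (by omega)
      refine ⟨m, by omega, h1, ?_⟩
      intro m' hm' hne
      rcases Nat.lt_or_ge m' n with h' | h'
      · exact h0 m' h' hne
      · have he : m' = n := by omega
        subst he
        omega
    
lemma sum_two_cases {f : ℕ → ℕ} {n : ℕ} (h : ∑ m ∈ Finset.range n, f m = 2) :
    (∃ m, m < n ∧ f m = 2 ∧ ∀ m', m' < n → m' ≠ m → f m' = 0) ∨
    (∃ m1 m2, m1 < m2 ∧ m2 < n ∧ f m1 = 1 ∧ f m2 = 1 ∧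
      ∀ m', m' < n → m' ≠ m1 → m' ≠ m2 → f m' = 0) := by
  induction n with
  | zero => simp at h
  | succ n ih =>
    rw [Finset.sum_range_succ] at h
    rcases Nat.lt_or_ge (f n) 1 with hp | hp
    · rcases ih (by omega) with ⟨m, hm, h2, h0⟩ | ⟨m1, m2, hlt, hm2, h1, h1', h0⟩
      · refine Or.inl ⟨m, by omega, h2, fun m' hm' hne => ?_⟩
        rcases Nat.lt_or_ge m' n with h' | h'
        · exact h0 m' h' hne
        · have he : m' = n := by omega
          subst he
          omega
      · refine Or.inr ⟨m1, m2, hlt, by omega, h1, h1', fun m' hm' hne1 hne2 => ?_⟩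
        rcases Nat.lt_or_ge m' n with h' | h'
        · exact h0 m' h' hne1 hne2
        · have he : m' = n := by omega
          subst he
          omega
    · rcases Nat.lt_or_ge (f n) 2 with hq | hq
      · have h1 : ∑ m ∈ Finset.range n, f m = 1 := by omega
        obtain ⟨m, hm, hm1, h0⟩ := sum_one_cases h1
        refine Or.inr ⟨m, n, hm, by omega, hm1, by omega, fun m' hm' hne1 hne2 => ?_⟩
        exact h0 m' (by omega) hne1
      · have h0 : ∑ m ∈ Finset.range n, f m = 0 := by omega
        refine Or.inl ⟨n, by omega, by omega, fun m' hm' hne => ?_⟩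
        exact sum_zero_all h0 m' (by omega)

lemma sum_pair_indicator {f : ℕ → ℕ} {n p1 p2 : ℕ} (h1 : p1 < p2) (h2 : p2 < n)
    (hp1 : f p1 = 1) (hp2 : f p2 = 1) (h0 : ∀ m, m < n → m ≠ p1 → m ≠ p2 → f m = 0)
    {s : Finset ℕ} (hs : s ⊆ Finset.range n) :
    ∑ m ∈ s, f m = (if p1 ∈ s then 1 else 0) + (if p2 ∈ s then 1 else 0) := by
  classical
  have key : ∑ m ∈ s.filter (fun m => m = p1 ∨ m = p2), f m = ∑ m ∈ s, f m := by
    apply Finset.sum_filter_of_ne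
    intro m hm hfm
    by_contra hc
    push_neg at hc
    exact hfm (h0 m (Finset.mem_range.mp (hs hm)) hc.1 hc.2)
  rw [← key]
  by_cases a1 : p1 ∈ s <;> by_cases a2 : p2 ∈ s
  · have : s.filter (fun m => m = p1 ∨ m = p2) = {p1, p2} := by
      ext m
      simp only [Finset.mem_filter, Finset.mem_insert, Finset.mem_singleton]
      constructor
      · rintro ⟨_, h⟩; exact h
      · rintro (rfl | rfl) <;> exact ⟨by assumption, by omega⟩
    rw [this, Finset.sum_pair (by omega)]
    simp [a1, a2, hp1, hp2]
  · have : s.filter (fun m => m = p1 ∨ m = p2) = {p1} := by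
      ext m
      simp only [Finset.mem_filter, Finset.mem_singleton]
      constructor
      · rintro ⟨hms, h | h⟩
        · exact h
        · exact absurd (h ▸ hms) a2
      · rintro rfl; exact ⟨a1, Or.inl rfl⟩
    rw [this, Finset.sum_singleton]
    simp [a1, a2, hp1]
  · have : s.filter (fun m => m = p1 ∨ m = p2) = {p2} := by
      ext m
      simp only [Finset.mem_filter, Finset.mem_singleton]
      constructor
      · rintro ⟨hms, h | h⟩
        · exact absurd (h ▸ hms) a1
        · exact h
      · rintro rfl; exact ⟨a2, Or.inr rfl⟩
    rw [this, Finset.sum_singleton]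
    simp [a1, a2, hp2]
  · have : s.filter (fun m => m = p1 ∨ m = p2) = ∅ := by
      ext m
      simp only [Finset.mem_filter, Finset.notMem_empty, iff_false]
      rintro ⟨hms, rfl | rfl⟩
      exacts [a1 hms, a2 hms]
    rw [this]
    simp [a1, a2]

end Aux

/-- Lemma (group ordering, part (c)): if `x` occurs in `γ i` and `y` occurs in
`γ j`, where `γ j` is neither `γ i` nor its opposite word `γ (i+k)` (indices
modulo `2k`), and `x ≠ y`, then `x` and `y` are adjacent in `G`. -/
theorem symbols_of_nonopposite_subwords_adjacent
    {V : Type*} [DecidableEq V] [Fintype V]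
    (G : SimpleGraph V) (hconn : G.Connected)
    (A B SA SB : Finset V) (hsplit : IsSplit G A B SA SB)
    (τ : List V) (hτ : IsCircleRep G τ)
    (k : ℕ) (γ : ℕ → List V)
    (hjoin : ((List.range (2 * k)).map γ).flatten ~r
      τ.filter (fun x => decide (x ∈ A ∪ B)))
    (hne : ∀ i < 2 * k, γ i ≠ [])
    (hAword : ∀ i < 2 * k, i % 2 = 0 → ∀ x ∈ γ i, x ∈ A)
    (hBword : ∀ i < 2 * k, i % 2 = 1 → ∀ x ∈ γ i, x ∈ B) :
    ∀ i < 2 * k, ∀ j < 2 * k, j ≠ i → j ≠ (i + k) % (2 * k) →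
      ∀ x ∈ γ i, ∀ y ∈ γ j, x ≠ y → G.Adj x y := by
  obtain ⟨hcount, hadjalt⟩ := hτ
  obtain ⟨hcov, hAB, hASA, hASB, hBSA, hBSB, hSS, hadj, hSA, hSB, hc1, hc2⟩ := hsplit
  intro i hi j hj hji hjik x hx y hy hxy
  have hk1 : 1 ≤ k := by omega
  have hwperm : (((List.range (2*k)).map γ).flatten).Perm
      (τ.filter (fun x => decide (x ∈ A ∪ B))) := hjoin.perm
  have hcw : ∀ v : V, v ∈ A ∪ B → (((List.range (2*k)).map γ).flatten).count v = 2 := by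
    intro v hv
    rw [hwperm.count_eq, List.count_filter (by simpa using hv), hcount v]
  have hAltw : ∀ u v : V, u ≠ v → u ∈ A ∪ B → v ∈ A ∪ B →
      (G.Adj u v ↔ Alternates (((List.range (2*k)).map γ).flatten) u v) := by
    intro u v huv hu hv
    rw [hadjalt u v huv,
      ← alternates_filter (p := fun x => decide (x ∈ A ∪ B)) (by simpa using hu)
        (by simpa using hv) (hcount u),
      ← alternates_isRotated hjoin (hcw u hu) (hcw v hv) huv]
  have hzero : ∀ (v : V) (m : ℕ), m < 2*k →
      ((m % 2 = 0 ∧ v ∉ A) ∨ (m % 2 = 1 ∧ v ∉ B)) → (γ m).count v = 0 := by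
    intro v m hm hcase
    rw [List.count_eq_zero]
    intro hmem
    rcases hcase with ⟨hp, hv⟩ | ⟨hp, hv⟩
    · exact hv (hAword m hm hp v hmem)
    · exact hv (hBword m hm hp v hmem)
  have hsum : ∀ v : V, v ∈ A ∪ B → ∑ m ∈ Finset.range (2*k), (γ m).count v = 2 := by
    intro v hv
    rw [← count_flatten_range]
    exact hcw v hv
  have hA0 : ∃ a, a ∈ A := by
    obtain ⟨a, ha⟩ := List.exists_mem_of_ne_nil _ (hne 0 (by omega))
    exact ⟨a, hAword 0 (by omega) (by omega) a ha⟩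
  have hB0 : ∃ b, b ∈ B := by
    obtain ⟨b, hb⟩ := List.exists_mem_of_ne_nil _ (hne 1 (by omega))
    exact ⟨b, hBword 1 (by omega) (by omega) b hb⟩
  have blocks : ∀ v : V, v ∈ A ∪ B → ∃ m1 m2, m1 < m2 ∧ m2 < 2*k ∧
      (γ m1).count v = 1 ∧ (γ m2).count v = 1 ∧
      ∀ m', m' < 2*k → m' ≠ m1 → m' ≠ m2 → (γ m').count v = 0 := by
    intro v hv
    rcases sum_two_cases (hsum v hv) with ⟨m, hm, h2, h0⟩ | ⟨m1, m2, h12, h2n, ha, hb, h0⟩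
    · exfalso
      have hvm : v ∈ γ m := List.count_pos_iff.mp (by omega)
      rcases Finset.mem_union.mp hv with hvA | hvB
      · have hm2 : m % 2 = 0 := by
          rcases Nat.mod_two_eq_zero_or_one m with h | h
          · exact h
          · exact absurd (hBword m hm h v hvm)
              (fun hb => (Finset.disjoint_left.mp hAB) hvA hb)
        obtain ⟨u, hu⟩ := hB0
        have huv : v ≠ u := fun h => (Finset.disjoint_left.mp hAB) hvA (h ▸ hu)
        have halt : Alternates (((List.range (2*k)).map γ).flatten) v u :=
          (hAltw v u huv (Finset.mem_union_left _ hvA) (Finset.mem_union_right _ hu)).mp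
            (hadj v hvA u hu)
        exact not_alternates_flatten_degenerate huv hm h2 h0
          (hzero u m hm (Or.inl ⟨hm2, fun h => (Finset.disjoint_left.mp hAB) h hu⟩)) halt
      · have hm2 : m % 2 = 1 := by
          rcases Nat.mod_two_eq_zero_or_one m with h | h
          · exact absurd (hAword m hm h v hvm)
              (fun ha => (Finset.disjoint_left.mp hAB) ha hvB)
          · exact h
        obtain ⟨u, hu⟩ := hA0
        have huv : v ≠ u := fun h => (Finset.disjoint_left.mp hAB) (h ▸ hu) hvB
        have halt : Alternates (((List.range (2*k)).map γ).flatten) v u :=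
          (hAltw v u huv (Finset.mem_union_right _ hvB) (Finset.mem_union_left _ hu)).mp
            ((hadj u hu v hvB).symm)
        exact not_alternates_flatten_degenerate huv hm h2 h0
          (hzero u m hm (Or.inr ⟨hm2, fun h => (Finset.disjoint_left.mp hAB) hu h⟩)) halt
    · exact ⟨m1, m2, h12, h2n, ha, hb, h0⟩
  set CA : ℕ → ℕ → Prop := fun i1 i2 => ∃ v ∈ A, i1 < i2 ∧ i2 < 2*k ∧
    (γ i1).count v = 1 ∧ (γ i2).count v = 1 ∧
    (∀ m', m' < 2*k → m' ≠ i1 → m' ≠ i2 → (γ m').count v = 0) with hCAdef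
  set CB : ℕ → ℕ → Prop := fun i1 i2 => ∃ v ∈ B, i1 < i2 ∧ i2 < 2*k ∧
    (γ i1).count v = 1 ∧ (γ i2).count v = 1 ∧
    (∀ m', m' < 2*k → m' ≠ i1 → m' ≠ i2 → (γ m').count v = 0) with hCBdef
  have hCA : ∀ i1 i2, CA i1 i2 → i1 < i2 ∧ i2 < 2*k ∧ i1 % 2 = 0 ∧ i2 % 2 = 0 := by
    rintro i1 i2 ⟨v, hvA, h12, h2n, c1, c2, h0⟩
    have hnA : ∀ m, m < 2*k → m % 2 = 1 → (γ m).count v = 0 := fun m hm hp =>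
      hzero v m hm (Or.inr ⟨hp, fun hb => (Finset.disjoint_left.mp hAB) hvA hb⟩)
    refine ⟨h12, h2n, ?_, ?_⟩
    · rcases Nat.mod_two_eq_zero_or_one i1 with h | h
      · exact h
      · exact absurd (hnA i1 (by omega) h) (by omega)
    · rcases Nat.mod_two_eq_zero_or_one i2 with h | h
      · exact h
      · exact absurd (hnA i2 (by omega) h) (by omega)
  have hCB : ∀ i1 i2, CB i1 i2 → i1 < i2 ∧ i2 < 2*k ∧ i1 % 2 = 1 ∧ i2 % 2 = 1 := by
    rintro i1 i2 ⟨v, hvB, h12, h2n, c1, c2, h0⟩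
    have hnB : ∀ m, m < 2*k → m % 2 = 0 → (γ m).count v = 0 := fun m hm hp =>
      hzero v m hm (Or.inl ⟨hp, fun ha => (Finset.disjoint_left.mp hAB) ha hvB⟩)
    refine ⟨h12, h2n, ?_, ?_⟩
    · rcases Nat.mod_two_eq_zero_or_one i1 with h | h
      · exact absurd (hnB i1 (by omega) h) (by omega)
      · exact h
    · rcases Nat.mod_two_eq_zero_or_one i2 with h | h
      · exact absurd (hnB i2 (by omega) h) (by omega)
      · exact h
  have crossAB : ∀ i1 i2 p1 p2, CA i1 i2 → CB p1 p2 →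
      (i1 < p1 ∧ p1 < i2 ∧ i2 < p2) ∨ (p1 < i1 ∧ i1 < p2 ∧ p2 < i2) := by
    intro i1 i2 p1 p2 hX hY
    have hCAx := hCA _ _ hX
    have hCBy := hCB _ _ hY
    obtain ⟨a, haA, h12, h2n, c1, c2, h0⟩ := hX
    obtain ⟨b, hbB, hp12, hp2n, d1, d2, d0⟩ := hY
    have hab : a ≠ b := fun h => Finset.disjoint_left.mp hAB haA (h ▸ hbB)
    have halt : Alternates (((List.range (2*k)).map γ).flatten) a b :=
      (hAltw a b hab (Finset.mem_union_left _ haA) (Finset.mem_union_right _ hbB)).mp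
        (hadj a haA b hbB)
    have hv1 : (γ i1).count b = 0 :=
      hzero b i1 (by omega) (Or.inl ⟨hCAx.2.2.1, fun hc => Finset.disjoint_left.mp hAB hc hbB⟩)
    have hv2 : (γ i2).count b = 0 :=
      hzero b i2 (by omega) (Or.inl ⟨hCAx.2.2.2, fun hc => Finset.disjoint_left.mp hAB hc hbB⟩)
    have hsum1 := (alternates_flatten_iff hab h12 h2n c1 c2 h0 hv1 hv2).mp halt
    rw [sum_pair_indicator hp12 hp2n d1 d2 d0
      (s := Finset.Ioo i1 i2) (by
        intro m hm
        simp only [Finset.mem_Ioo] at hm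
        simp only [Finset.mem_range]
        omega)] at hsum1
    simp only [Finset.mem_Ioo] at hsum1
    split_ifs at hsum1 <;> omega
  have coverA : ∀ m, m < 2*k → m % 2 = 0 → ∃ i1 i2, CA i1 i2 ∧ (m = i1 ∨ m = i2) := by
    intro m hm hp
    obtain ⟨v, hvmem⟩ := List.exists_mem_of_ne_nil _ (hne m hm)
    have hvA := hAword m hm hp v hvmem
    obtain ⟨m1, m2, h12, h2n, e1, e2, h0⟩ := blocks v (Finset.mem_union_left _ hvA)
    have hmor : m = m1 ∨ m = m2 := by
      by_contra hc
      push_neg at hc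
      have hz := h0 m hm hc.1 hc.2
      have hpos : 0 < (γ m).count v := List.count_pos_iff.mpr hvmem
      omega
    exact ⟨m1, m2, ⟨v, hvA, h12, h2n, e1, e2, h0⟩, hmor⟩
  have coverB : ∀ m, m < 2*k → m % 2 = 1 → ∃ i1 i2, CB i1 i2 ∧ (m = i1 ∨ m = i2) := by
    intro m hm hp
    obtain ⟨v, hvmem⟩ := List.exists_mem_of_ne_nil _ (hne m hm)
    have hvB := hBword m hm hp v hvmem
    obtain ⟨m1, m2, h12, h2n, e1, e2, h0⟩ := blocks v (Finset.mem_union_right _ hvB)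
    have hmor : m = m1 ∨ m = m2 := by
      by_contra hc
      push_neg at hc
      have hz := h0 m hm hc.1 hc.2
      have hpos : 0 < (γ m).count v := List.count_pos_iff.mpr hvmem
      omega
    exact ⟨m1, m2, ⟨v, hvB, h12, h2n, e1, e2, h0⟩, hmor⟩
  have diamA : ∀ i1 i2, CA i1 i2 → i2 = i1 + k :=
    chord_diameter rfl (by omega) CA CB hCA
      (fun p1 p2 h => by have := hCB p1 p2 h; omega)
      crossAB coverA (fun m hm hp => coverB m hm (by omega))
  have diamB : ∀ i1 i2, CB i1 i2 → i2 = i1 + k :=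
    chord_diameter (r := 1) rfl (by omega) CB CA
      (fun p1 p2 h => by have := hCB p1 p2 h; omega)
      (fun p1 p2 h => by have := hCA p1 p2 h; omega)
      (fun p1 p2 q1 q2 h1 h2 => by
        rcases crossAB q1 q2 p1 p2 h2 h1 with h | h
        · exact Or.inr h
        · exact Or.inl h)
      coverB (fun m hm hp => coverA m hm (by omega))
  -- final case analysis
  rcases Nat.mod_two_eq_zero_or_one i with hpi | hpi <;>
    rcases Nat.mod_two_eq_zero_or_one j with hpj | hpj
  · -- both even : x, y ∈ A
    have hxA := hAword i hi hpi x hx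
    have hyA := hAword j hj hpj y hy
    obtain ⟨m1, m2, hm12, hm2n, cx1, cx2, cx0⟩ := blocks x (Finset.mem_union_left _ hxA)
    obtain ⟨n1, n2, hn12, hn2n, cy1, cy2, cy0⟩ := blocks y (Finset.mem_union_left _ hyA)
    have hCAx : CA m1 m2 := ⟨x, hxA, hm12, hm2n, cx1, cx2, cx0⟩
    have hCAy : CA n1 n2 := ⟨y, hyA, hn12, hn2n, cy1, cy2, cy0⟩
    have hdx : m2 = m1 + k := diamA _ _ hCAx
    have hdy : n2 = n1 + k := diamA _ _ hCAy
    have hix : i = m1 ∨ i = m2 := by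
      by_contra hc
      push_neg at hc
      have hz := cx0 i hi hc.1 hc.2
      have hpos : 0 < (γ i).count x := List.count_pos_iff.mpr hx
      omega
    have hjy : j = n1 ∨ j = n2 := by
      by_contra hc
      push_neg at hc
      have hz := cy0 j hj hc.1 hc.2
      have hpos : 0 < (γ j).count y := List.count_pos_iff.mpr hy
      omega
    have hmodk : (i + k) % (2*k) = (if i = m1 then m2 else m1) := by
      rcases hix with rfl | rfl
      · rw [if_pos rfl, Nat.mod_eq_of_lt (by omega)]
        omega
      · rw [if_neg (by omega), hdx,
          show m1 + k + k = m1 + 1 * (2*k) by ring, Nat.add_mul_mod_self_right,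
          Nat.mod_eq_of_lt (by omega)]
    have hn1m1 : n1 ≠ m1 := by
      intro he
      rcases hjy with rfl | rfl
      · rcases hix with he2 | he2
        · exact hji (by omega)
        · rw [hmodk, if_neg (by omega)] at hjik
          exact hjik (by omega)
      · rcases hix with he2 | he2
        · rw [hmodk, if_pos (by omega)] at hjik
          exact hjik (by omega)
        · exact hji (by omega)
    have hsumy : ∑ m ∈ Finset.Ioo m1 m2, (γ m).count y = 1 := by
      rw [sum_pair_indicator hn12 hn2n cy1 cy2 cy0
        (s := Finset.Ioo m1 m2) (by
          intro m hm
          simp only [Finset.mem_Ioo] at hm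
          simp only [Finset.mem_range]
          omega)]
      simp only [Finset.mem_Ioo]
      split_ifs <;> omega
    have hv1 : (γ m1).count y = 0 := cy0 m1 (by omega) (by omega) (by omega)
    have hv2 : (γ m2).count y = 0 := cy0 m2 (by omega) (by omega) (by omega)
    have halty : Alternates (((List.range (2*k)).map γ).flatten) x y :=
      (alternates_flatten_iff hxy hm12 hm2n cx1 cx2 cx0 hv1 hv2).mpr hsumy
    exact (hAltw x y hxy (Finset.mem_union_left _ hxA) (Finset.mem_union_left _ hyA)).mpr halty
  · -- i even, j odd
    exact hadj x (hAword i hi hpi x hx) y (hBword j hj hpj y hy)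
  · -- i odd, j even
    exact (hadj y (hAword j hj hpj y hy) x (hBword i hi hpi x hx)).symm
  · -- both odd : x, y ∈ B
    have hxB := hBword i hi hpi x hx
    have hyB := hBword j hj hpj y hy
    obtain ⟨m1, m2, hm12, hm2n, cx1, cx2, cx0⟩ := blocks x (Finset.mem_union_right _ hxB)
    obtain ⟨n1, n2, hn12, hn2n, cy1, cy2, cy0⟩ := blocks y (Finset.mem_union_right _ hyB)
    have hCBx : CB m1 m2 := ⟨x, hxB, hm12, hm2n, cx1, cx2, cx0⟩
    have hCBy : CB n1 n2 := ⟨y, hyB, hn12, hn2n, cy1, cy2, cy0⟩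
    have hdx : m2 = m1 + k := diamB _ _ hCBx
    have hdy : n2 = n1 + k := diamB _ _ hCBy
    have hix : i = m1 ∨ i = m2 := by
      by_contra hc
      push_neg at hc
      have hz := cx0 i hi hc.1 hc.2
      have hpos : 0 < (γ i).count x := List.count_pos_iff.mpr hx
      omega
    have hjy : j = n1 ∨ j = n2 := by
      by_contra hc
      push_neg at hc
      have hz := cy0 j hj hc.1 hc.2
      have hpos : 0 < (γ j).count y := List.count_pos_iff.mpr hy
      omega
    have hmodk : (i + k) % (2*k) = (if i = m1 then m2 else m1) := by
      rcases hix with rfl | rfl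
      · rw [if_pos rfl, Nat.mod_eq_of_lt (by omega)]
        omega
      · rw [if_neg (by omega), hdx,
          show m1 + k + k = m1 + 1 * (2*k) by ring, Nat.add_mul_mod_self_right,
          Nat.mod_eq_of_lt (by omega)]
    have hn1m1 : n1 ≠ m1 := by
      intro he
      rcases hjy with rfl | rfl
      · rcases hix with he2 | he2
        · exact hji (by omega)
        · rw [hmodk, if_neg (by omega)] at hjik
          exact hjik (by omega)
      · rcases hix with he2 | he2
        · rw [hmodk, if_pos (by omega)] at hjik
          exact hjik (by omega)
        · exact hji (by omega)
    have hsumy : ∑ m ∈ Finset.Ioo m1 m2, (γ m).count y = 1 := by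
      rw [sum_pair_indicator hn12 hn2n cy1 cy2 cy0
        (s := Finset.Ioo m1 m2) (by
          intro m hm
          simp only [Finset.mem_Ioo] at hm
          simp only [Finset.mem_range]
          omega)]
      simp only [Finset.mem_Ioo]
      split_ifs <;> omega
    have hv1 : (γ m1).count y = 0 := cy0 m1 (by omega) (by omega) (by omega)
    have hv2 : (γ m2).count y = 0 := cy0 m2 (by omega) (by omega) (by omega)
    have halty : Alternates (((List.range (2*k)).map γ).flatten) x y :=
      (alternates_flatten_iff hxy hm12 hm2n cx1 cx2 cx0 hv1 hv2).mpr hsumy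
    exact (hAltw x y hxy (Finset.mem_union_right _ hxB) (Finset.mem_union_right _ hyB)).mpr halty
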